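/- Let Z be a cyclic group. If N(h_1,…, z h_s) and N(h_1',…, z' h_{s'}') (with h_i, h_i' ∈ P nonzero, h_1|…|h_s, h_1'|…|h_{s'}', z, z' ∈ Z^×) lie in the same GL_n(ℤ)-orbit on Alt_n(Z) under g.A = gAg^⊤, then s = s' and h_i = h_i' for all i. -/

import Mathlib

open Matrix

/-! ### Auxiliary counting lemmas -/

lemma aux_card_ann (M : ℕ) [NeZero M] (k : ℕ) :
    Nat.card {y : ZMod M // (k : ZMod M) * y = 0} = Nat.gcd k M := by
  classical
  set b : ZMod M := (k : ZMod M) with hb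
  let f : ZMod M →+ ZMod M := AddMonoidHom.mulLeft b
  have hker : {y : ZMod M // b * y = 0} ≃ f.ker := Equiv.subtypeEquivRight (by
    intro y; simp [f, AddMonoidHom.mem_ker])
  have hrange : f.range = AddSubgroup.zmultiples b := by
    ext y
    constructor
    · rintro ⟨a, rfl⟩
      refine ⟨a.val, ?_⟩
      simp [f]
      exact mul_comm a b
    · rintro ⟨n, rfl⟩
      exact ⟨(n : ZMod M), by simp [f, zsmul_eq_mul, mul_comm]⟩
  have h1 : Nat.card (ZMod M) = Nat.card (ZMod M ⧸ f.ker) * Nat.card f.ker :=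
    AddSubgroup.card_eq_card_quotient_mul_card_addSubgroup f.ker
  have h2 : Nat.card (ZMod M ⧸ f.ker) = Nat.card f.range :=
    Nat.card_congr (QuotientAddGroup.quotientKerEquivRange f).toEquiv
  have h3 : Nat.card f.range = addOrderOf b := by
    rw [hrange]; exact Nat.card_zmultiples b
  have h4 : addOrderOf b = M / Nat.gcd M k := ZMod.addOrderOf_coe k (NeZero.ne M)
  have hcard : Nat.card (ZMod M) = M := by simp [Nat.card_eq_fintype_card, ZMod.card]
  have hgdvd : Nat.gcd M k ∣ M := Nat.gcd_dvd_left M k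
  have hgpos : 0 < Nat.gcd M k := Nat.gcd_pos_of_pos_left k (Nat.pos_of_ne_zero (NeZero.ne M))
  have hMg : M / Nat.gcd M k * Nat.gcd M k = M := Nat.div_mul_cancel hgdvd
  have hq : 0 < M / Nat.gcd M k :=
    Nat.div_pos (Nat.le_of_dvd (Nat.pos_of_ne_zero (NeZero.ne M)) hgdvd) hgpos
  have := h1
  rw [hcard, h2, h3, h4] at this
  have hcomm : Nat.gcd k M = Nat.gcd M k := Nat.gcd_comm k M
  rw [Nat.card_congr hker, hcomm]
  have : M / Nat.gcd M k * Nat.gcd M k = M / Nat.gcd M k * Nat.card f.ker := by omega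
  exact (Nat.eq_of_mul_eq_mul_left hq this).symm

lemma aux_card_ann_int (M : ℕ) [NeZero M] (x : ℤ) :
    Nat.card {y : ZMod M // (x : ZMod M) * y = 0} = Int.gcd x M := by
  have hor : ((x.natAbs : ℤ) : ZMod M) = (x : ZMod M)
      ∨ ((x.natAbs : ℤ) : ZMod M) = -(x : ZMod M) := by
    rcases Int.natAbs_eq x with hh | hh
    · left; rw [← hh]
    · right; rw [hh]; simp
  have key : {y : ZMod M // (x : ZMod M) * y = 0}
      ≃ {y : ZMod M // ((x.natAbs : ℕ) : ZMod M) * y = 0} := by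
    refine Equiv.subtypeEquivRight fun y => ?_
    rw [show ((x.natAbs : ℕ) : ZMod M) = ((x.natAbs : ℤ) : ZMod M) from (Int.cast_natCast _).symm]
    rcases hor with hh | hh <;> rw [hh] <;>
      constructor <;> intro hy <;>
      first
        | exact hy
        | simpa [neg_mul, neg_eq_zero] using hy
  rw [Nat.card_congr key, aux_card_ann]
  rfl

def Nmat {R : Type*} [Ring R] (n s : ℕ) (h : ℕ → R) : Matrix (Fin n) (Fin n) R :=
  Matrix.of fun i j =>
    if (j : ℕ) = (i : ℕ) + 1 ∧ (i : ℕ) % 2 = 0 ∧ (i : ℕ) < 2 * s then h ((i : ℕ) / 2)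
    else if (i : ℕ) = (j : ℕ) + 1 ∧ (j : ℕ) % 2 = 0 ∧ (j : ℕ) < 2 * s then
      - h ((j : ℕ) / 2)
    else 0

section rows
variable {R : Type*} [Ring R] (n s : ℕ) (h : ℕ → R) (x : Fin n → R)

lemma Nmat_row_even (r j : Fin n) (hr : (r : ℕ) < 2 * s) (hpar : (r : ℕ) % 2 = 0)
    (hj : (j : ℕ) = (r : ℕ) + 1) :
    (Nmat n s h).mulVec x r = h ((r : ℕ) / 2) * x j := by
  rw [Matrix.mulVec, dotProduct]
  rw [Finset.sum_eq_single j]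
  · simp only [Nmat, Matrix.of_apply]
    rw [if_pos ⟨hj, hpar, hr⟩]
  · intro j' _ hj'
    have hj'' : (j' : ℕ) ≠ (r : ℕ) + 1 := fun hc => hj' (Fin.ext (by omega))
    simp only [Nmat, Matrix.of_apply]
    rw [if_neg (by tauto), if_neg (by omega)]
    exact zero_mul _
  · intro hmem; exact absurd (Finset.mem_univ _) hmem

lemma Nmat_row_odd (r j : Fin n) (hr : (r : ℕ) < 2 * s) (hpar : (r : ℕ) % 2 = 1)
    (hj : (j : ℕ) = (r : ℕ) - 1) :
    (Nmat n s h).mulVec x r = - (h ((r : ℕ) / 2) * x j) := by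
  rw [Matrix.mulVec, dotProduct]
  rw [Finset.sum_eq_single j]
  · simp only [Nmat, Matrix.of_apply]
    rw [if_neg (by omega), if_pos ⟨by omega, by omega, by omega⟩]
    have : ((j : ℕ)) / 2 = (r : ℕ) / 2 := by omega
    rw [this, neg_mul]
  · intro j' _ hj'
    have hj'' : (j' : ℕ) ≠ (r : ℕ) - 1 := fun hc => hj' (Fin.ext (by omega))
    simp only [Nmat, Matrix.of_apply]
    rw [if_neg (by omega), if_neg (by omega)]
    exact zero_mul _
  · intro hmem; exact absurd (Finset.mem_univ _) hmem

lemma Nmat_row_far (r : Fin n) (hr : ¬ ((r : ℕ) < 2 * s)) :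
    (Nmat n s h).mulVec x r = 0 := by
  rw [Matrix.mulVec, dotProduct]
  apply Finset.sum_eq_zero
  intro j _
  simp only [Nmat, Matrix.of_apply]
  rw [if_neg (by omega), if_neg (by omega)]
  exact zero_mul _

end rows

lemma Nmat_mulVec_zero_iff {R : Type*} [Ring R] (n s : ℕ) (hs : 2 * s ≤ n) (h : ℕ → R)
    (x : Fin n → R) :
    (Nmat n s h).mulVec x = 0 ↔ ∀ j : Fin n, (j : ℕ) < 2 * s → h ((j : ℕ) / 2) * x j = 0 := by
  constructor
  · intro hx j hj
    have hx' := congrFun hx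
    by_cases hpar : (j : ℕ) % 2 = 0
    · -- use odd row r := j+1
      set r : Fin n := ⟨(j : ℕ) + 1, by omega⟩ with hrdef
      have h1 := hx' r
      rw [Nmat_row_odd n s h x r j (by simp [hrdef]; omega) (by simp [hrdef]; omega)
        (by simp [hrdef])] at h1
      simp only [Pi.zero_apply] at h1
      have h3 : ((r : ℕ)) / 2 = (j : ℕ) / 2 := by simp [hrdef]; omega
      rw [h3] at h1
      exact neg_eq_zero.mp h1
    · -- j odd: use even row r := j - 1
      set r : Fin n := ⟨(j : ℕ) - 1, by omega⟩ with hrdef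
      have h1 := hx' r
      rw [Nmat_row_even n s h x r j (by simp [hrdef]; omega) (by simp [hrdef]; omega)
        (by simp [hrdef]; omega)] at h1
      simp only [Pi.zero_apply] at h1
      have h3 : ((r : ℕ)) / 2 = (j : ℕ) / 2 := by simp [hrdef]; omega
      rw [h3] at h1
      exact h1
  · intro hx
    funext r
    simp only [Pi.zero_apply]
    by_cases hr : (r : ℕ) < 2 * s
    · by_cases hpar : (r : ℕ) % 2 = 0
      · set j : Fin n := ⟨(r : ℕ) + 1, by omega⟩ with hjdef
        rw [Nmat_row_even n s h x r j hr hpar (by simp [hjdef])]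
        have h3 : ((j : ℕ)) / 2 = (r : ℕ) / 2 := by simp [hjdef]; omega
        have := hx j (by simp [hjdef]; omega)
        rw [h3] at this
        exact this
      · set j : Fin n := ⟨(r : ℕ) - 1, by omega⟩ with hjdef
        rw [Nmat_row_odd n s h x r j hr (by omega) (by simp [hjdef])]
        have h3 : ((j : ℕ)) / 2 = (r : ℕ) / 2 := by simp [hjdef]; omega
        have := hx j (by simp [hjdef]; omega)
        rw [h3] at this
        rw [this, neg_zero]
    · exact Nmat_row_far n s h x r hr
lemma aux_card_solutions (M n s : ℕ) [NeZero M] (L : ℕ → ℤ)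
    (N : Matrix (Fin n) (Fin n) (ZMod M))
    (hN : ∀ x : Fin n → ZMod M, N.mulVec x = 0 ↔
      ∀ j : Fin n, (j : ℕ) < 2 * s → ((L ((j : ℕ) / 2) : ℤ) : ZMod M) * x j = 0) :
    Nat.card {x : Fin n → ZMod M // N.mulVec x = 0}
      = ∏ j : Fin n, (if (j : ℕ) < 2 * s then Int.gcd (L ((j : ℕ) / 2)) M else M) := by
  classical
  have e1 : {x : Fin n → ZMod M // N.mulVec x = 0}
      ≃ {x : Fin n → ZMod M // ∀ j : Fin n, (j : ℕ) < 2 * s →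
          ((L ((j : ℕ) / 2) : ℤ) : ZMod M) * x j = 0} :=
    Equiv.subtypeEquivRight fun x => hN x
  have e2 := e1.trans (Equiv.subtypePiEquivPi
    (p := fun (j : Fin n) (y : ZMod M) => (j : ℕ) < 2 * s → ((L ((j : ℕ) / 2) : ℤ) : ZMod M) * y = 0))
  rw [Nat.card_congr e2]
  rw [Nat.card_pi]
  apply Finset.prod_congr rfl
  intro j _
  by_cases hj : (j : ℕ) < 2 * s
  · rw [if_pos hj]
    have : {y : ZMod M // (j : ℕ) < 2 * s → ((L ((j : ℕ) / 2) : ℤ) : ZMod M) * y = 0}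
        ≃ {y : ZMod M // ((L ((j : ℕ) / 2) : ℤ) : ZMod M) * y = 0} :=
      Equiv.subtypeEquivRight fun y => by tauto
    rw [Nat.card_congr this, aux_card_ann_int]
  · rw [if_neg hj]
    have : {y : ZMod M // (j : ℕ) < 2 * s → ((L ((j : ℕ) / 2) : ℤ) : ZMod M) * y = 0}
        ≃ ZMod M := Equiv.subtypeUnivEquiv fun y => by tauto
    rw [Nat.card_congr this, Nat.card_eq_fintype_card, ZMod.card]

lemma aux_card_congruence (M n : ℕ) [NeZero M] (g : Matrix (Fin n) (Fin n) ℤ)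
    (hg : IsUnit ((g.map (Int.cast : ℤ → ZMod M)).det))
    (C : Matrix (Fin n) (Fin n) (ZMod M)) :
    Nat.card {x : Fin n → ZMod M //
        ((g.map (Int.cast : ℤ → ZMod M)) * C * (g.map (Int.cast : ℤ → ZMod M))ᵀ).mulVec x = 0}
      = Nat.card {x : Fin n → ZMod M // C.mulVec x = 0} := by
  classical
  set G := g.map (Int.cast : ℤ → ZMod M) with hG
  have : Invertible G := G.invertibleOfIsUnitDet hg
  have hT : Invertible Gᵀ := Matrix.invertibleTranspose G
  have hinj : ∀ y : Fin n → ZMod M, G.mulVec y = 0 → y = 0 := by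
    intro y hy
    have : (⅟G * G).mulVec y = 0 := by
      rw [← Matrix.mulVec_mulVec, hy, Matrix.mulVec_zero]
    rwa [invOf_mul_self, Matrix.one_mulVec] at this
  refine Nat.card_congr ⟨fun x => ⟨Gᵀ.mulVec x.1, ?_⟩, fun y => ⟨(⅟(Gᵀ)).mulVec y.1, ?_⟩, ?_, ?_⟩
  · obtain ⟨x, hx⟩ := x
    have h1 : G.mulVec ((C * Gᵀ).mulVec x) = 0 := by
      rw [Matrix.mulVec_mulVec, ← Matrix.mul_assoc]; exact hx
    have h2 := hinj _ h1
    rwa [← Matrix.mulVec_mulVec] at h2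
  · obtain ⟨y, hy⟩ := y
    simp only
    rw [Matrix.mulVec_mulVec, Matrix.mul_assoc (G * C), mul_invOf_self, Matrix.mul_one]
    rw [← Matrix.mulVec_mulVec, hy, Matrix.mulVec_zero]
  · intro x
    ext : 1
    simp only
    rw [Matrix.mulVec_mulVec, invOf_mul_self, Matrix.one_mulVec]
  · intro y
    ext : 1
    simp only
    rw [Matrix.mulVec_mulVec, mul_invOf_self, Matrix.one_mulVec]
lemma gcd_pow_prime {p : ℕ} (hp : p.Prime) (e : ℕ) {x : ℕ} (hx : x ≠ 0) :
    Nat.gcd x (p ^ e) = p ^ min (x.factorization p) e := by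
  have hpe : p ^ e ≠ 0 := pow_ne_zero e hp.pos.ne'
  have hg : Nat.gcd x (p ^ e) ∣ p ^ e := Nat.gcd_dvd_right x (p ^ e)
  obtain ⟨k, hk, hgk⟩ := (Nat.dvd_prime_pow hp).mp hg
  have hfact : (Nat.gcd x (p ^ e)).factorization = x.factorization ⊓ (p ^ e).factorization :=
    Nat.factorization_gcd hx hpe
  have h1 : (Nat.gcd x (p ^ e)).factorization p = min (x.factorization p) e := by
    rw [hfact]
    simp [Nat.Prime.factorization_pow, hp]
  rw [hgk] at h1 ⊢
  rw [hp.factorization_pow] at h1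
  simp only [Finsupp.smul_single, smul_eq_mul, mul_one, Finsupp.single_eq_same] at h1
  rw [h1]

-- step: sums of mins increment
lemma sum_min_succ (s e f : ℕ) (a : ℕ → ℕ) :
    ∑ i ∈ Finset.range s, min (a i + (f + 1)) e
      = (∑ i ∈ Finset.range s, min (a i + f) e)
        + ((Finset.range s).filter (fun i => a i + f < e)).card := by
  rw [Finset.card_filter, ← Finset.sum_add_distrib]
  apply Finset.sum_congr rfl
  intro i _
  split_ifs with hc <;> omega

lemma sumcnt (n s s' e : ℕ) (a b : ℕ → ℕ)
    (H : ∀ f : ℕ, e * (n - 2 * s) + 2 * ∑ i ∈ Finset.range s, min (a i + f) e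
      = e * (n - 2 * s') + 2 * ∑ i ∈ Finset.range s', min (b i + f) e) :
    ∀ T ≤ e, ((Finset.range s).filter (fun i => min (a i) e < T)).card
      = ((Finset.range s').filter (fun i => min (b i) e < T)).card := by
  intro T hT
  have key := H (e - T)
  have key2 := H (e - T + 1)
  have stepa := sum_min_succ s e (e - T) a
  have stepb := sum_min_succ s' e (e - T) b
  have hfa : ((Finset.range s).filter (fun i => a i + (e - T) < e)).card
      = ((Finset.range s).filter (fun i => min (a i) e < T)).card := by
    congr 1
    apply Finset.filter_congr
    intro i _
    omega
  have hfb : ((Finset.range s').filter (fun i => b i + (e - T) < e)).card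
      = ((Finset.range s').filter (fun i => min (b i) e < T)).card := by
    congr 1
    apply Finset.filter_congr
    intro i _
    omega
  omega

lemma sort_eq (e s : ℕ) (α β : ℕ → ℕ)
    (hmα : ∀ i j, i ≤ j → j < s → α i ≤ α j)
    (hmβ : ∀ i j, i ≤ j → j < s → β i ≤ β j)
    (hαe : ∀ i, i < s → α i ≤ e) (hβe : ∀ i, i < s → β i ≤ e)
    (hcnt : ∀ T ≤ e, ((Finset.range s).filter (fun i => α i < T)).card
      = ((Finset.range s).filter (fun i => β i < T)).card) :
    ∀ i < s, α i = β i := by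
  intro i hi
  by_contra hne
  rcases Nat.lt_or_ge (α i) (β i) with hlt | hge
  · -- α i < β i
    have h1 : ((Finset.range s).filter (fun j => α j < β i)).card ≥ i + 1 := by
      have : Finset.range (i + 1) ⊆ (Finset.range s).filter (fun j => α j < β i) := by
        intro j hj
        rw [Finset.mem_range] at hj
        rw [Finset.mem_filter, Finset.mem_range]
        exact ⟨by omega, lt_of_le_of_lt (hmα j i (by omega) hi) hlt⟩
      calc i + 1 = (Finset.range (i+1)).card := (Finset.card_range _).symm
        _ ≤ _ := Finset.card_le_card this
    have h2 : ((Finset.range s).filter (fun j => β j < β i)).card ≤ i := by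
      have : (Finset.range s).filter (fun j => β j < β i) ⊆ Finset.range i := by
        intro j hj
        rw [Finset.mem_filter, Finset.mem_range] at hj
        rw [Finset.mem_range]
        by_contra hji
        exact absurd (hmβ i j (by omega) hj.1) (by omega)
      calc _ ≤ (Finset.range i).card := Finset.card_le_card this
        _ = i := Finset.card_range _
    have := hcnt (β i) (hβe i hi)
    omega
  · have hlt : β i < α i := by omega
    have h1 : ((Finset.range s).filter (fun j => β j < α i)).card ≥ i + 1 := by
      have : Finset.range (i + 1) ⊆ (Finset.range s).filter (fun j => β j < α i) := by
        intro j hj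
        rw [Finset.mem_range] at hj
        rw [Finset.mem_filter, Finset.mem_range]
        exact ⟨by omega, lt_of_le_of_lt (hmβ j i (by omega) hi) hlt⟩
      calc i + 1 = (Finset.range (i+1)).card := (Finset.card_range _).symm
        _ ≤ _ := Finset.card_le_card this
    have h2 : ((Finset.range s).filter (fun j => α j < α i)).card ≤ i := by
      have : (Finset.range s).filter (fun j => α j < α i) ⊆ Finset.range i := by
        intro j hj
        rw [Finset.mem_filter, Finset.mem_range] at hj
        rw [Finset.mem_range]
        by_contra hji
        exact absurd (hmα i j (by omega) hj.1) (by omega)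
      calc _ ≤ (Finset.range i).card := Finset.card_le_card this
        _ = i := Finset.card_range _
    have := hcnt (α i) (hαe i hi)
    omega
lemma natAbs_cast_val (m : ℕ) (a : ZMod m) : (ZMod.cast a : ℤ).natAbs = a.val := by
  cases m with
  | zero => rfl
  | succ k =>
    rw [← ZMod.natCast_val a]
    exact Int.natAbs_natCast _

lemma exists_unit_eq_gcd (m : ℕ) [NeZero m] (a : ZMod m) :
    ∃ u : (ZMod m)ˣ, a = ((Nat.gcd a.val m : ℕ) : ZMod m) * u := by
  by_cases ha : a = 0
  · refine ⟨1, ?_⟩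
    subst ha
    simp [ZMod.val_zero, ZMod.natCast_self]
  · set g := Nat.gcd a.val m with hg
    have hval : a.val ≠ 0 := fun hc => ha ((ZMod.val_eq_zero a).mp hc)
    have hgpos : 0 < g := Nat.gcd_pos_of_pos_left m (Nat.pos_of_ne_zero hval)
    have hgm : g ∣ m := Nat.gcd_dvd_right _ _
    have hga : g ∣ a.val := Nat.gcd_dvd_left _ _
    set m₁ := m / g with hm₁
    set a₁ := a.val / g with ha₁
    have hm₁m : m₁ ∣ m := Nat.div_dvd_of_dvd hgm
    have hm₁pos : m₁ ≠ 0 := by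
      have h0 : 0 < m := Nat.pos_of_ne_zero (NeZero.ne m)
      have := Nat.div_pos (Nat.le_of_dvd h0 hgm) hgpos
      omega
    have : NeZero m₁ := ⟨hm₁pos⟩
    have hcop : a₁.Coprime m₁ := Nat.coprime_div_gcd_div_gcd hgpos
    obtain ⟨u, hu⟩ := ZMod.unitsMap_surjective hm₁m (ZMod.unitOfCoprime a₁ hcop)
    refine ⟨u, ?_⟩
    set U := (u : ZMod m).val with hU
    have hcast : ((U : ℕ) : ZMod m₁) = (a₁ : ZMod m₁) := by
      have h2 := congrArg (fun w => ((w : (ZMod m₁)ˣ) : ZMod m₁)) hu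
      simp only [ZMod.unitsMap_def, Units.coe_map, MonoidHom.coe_coe] at h2
      rw [ZMod.coe_unitOfCoprime] at h2
      rw [← h2, ZMod.castHom_apply, ← ZMod.natCast_val]
    have hdvd1 : (m₁ : ℤ) ∣ (a₁ : ℤ) - (U : ℤ) :=
      ((Nat.modEq_iff_dvd).mp ((ZMod.natCast_eq_natCast_iff _ _ _).mp hcast))
    have hga' : (g : ℤ) * (a₁ : ℤ) = (a.val : ℤ) := by
      rw [← Nat.cast_mul]
      congr 1
      exact Nat.mul_div_cancel' hga
    have hgm' : (g : ℤ) * (m₁ : ℤ) = (m : ℤ) := by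
      rw [← Nat.cast_mul]
      congr 1
      exact Nat.mul_div_cancel' hgm
    have hdvd2 : (m : ℤ) ∣ (a.val : ℤ) - (g : ℤ) * (U : ℤ) := by
      rw [← hgm', ← hga']
      obtain ⟨k, hk⟩ := hdvd1
      exact ⟨k, by rw [← mul_sub] at *; rw [hk]; ring⟩
    -- now conclude in ZMod m
    have h3 : ((a.val : ℕ) : ZMod m) = ((g * U : ℕ) : ZMod m) := by
      rw [ZMod.natCast_eq_natCast_iff]
      rw [Nat.modEq_iff_dvd]
      push_cast
      exact dvd_sub_comm.mp hdvd2
    calc a = ((a.val : ℕ) : ZMod m) := (ZMod.natCast_rightInverse a).symm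
      _ = ((g * U : ℕ) : ZMod m) := h3
      _ = (g : ZMod m) * (U : ZMod m) := by push_cast; ring
      _ = (g : ZMod m) * u := by rw [hU, ZMod.natCast_rightInverse]

lemma assoc_of_gcd_eq (m : ℕ) (a b : ZMod m) (hab : Nat.gcd a.val m = Nat.gcd b.val m) :
    ∃ u : (ZMod m)ˣ, a = b * u := by
  cases m with
  | zero =>
    have h : (ZMod.val a) = (ZMod.val b) := by simpa using hab
    have h' : (a : ℤ).natAbs = (b : ℤ).natAbs := h
    rcases Int.natAbs_eq_natAbs_iff.mp h' with hh | hh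
    · exact ⟨1, by rw [Units.val_one, mul_one]; exact hh⟩
    · refine ⟨-1, ?_⟩
      show (a : ℤ) = b * ((-1 : (ZMod 0)ˣ) : ZMod 0)
      rw [Units.val_neg, Units.val_one, mul_neg_one]
      exact hh
  | succ k =>
    obtain ⟨u, hu⟩ := exists_unit_eq_gcd (k+1) a
    obtain ⟨v, hv⟩ := exists_unit_eq_gcd (k+1) b
    refine ⟨v⁻¹ * u, ?_⟩
    rw [hu, hv, hab]
    push_cast
    rw [mul_assoc]
    congr 1
    rw [← mul_assoc, ← Units.val_mul, ← Units.val_mul]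
    congr 1
    group

lemma gcd_val_unit_mul (m : ℕ) (u : (ZMod m)ˣ) (a : ZMod m) :
    Nat.gcd ((↑u * a).val) m = Nat.gcd a.val m := by
  cases m with
  | zero =>
    have hu : (u : ZMod 0) = 1 ∨ (u : ZMod 0) = -1 := Int.isUnit_iff.mp u.isUnit
    rcases hu with hh | hh <;> rw [hh]
    · rw [one_mul]
    · rw [neg_one_mul]
      have hv : ZMod.val (-a) = ZMod.val a := Int.natAbs_neg a
      rw [hv]
  | succ k =>
    rw [ZMod.val_mul]
    have h1 : Nat.gcd ((↑u : ZMod (k+1)).val * a.val % (k+1)) (k+1)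
        = Nat.gcd ((↑u : ZMod (k+1)).val * a.val) (k+1) := by
      rw [← Nat.gcd_rec]
      exact Nat.gcd_comm _ _
    rw [h1]
    exact Nat.Coprime.gcd_mul_left_cancel a.val (ZMod.val_coe_unit_coprime u)
lemma prod_halves {β : Type*} [CommMonoid β] (s : ℕ) (u : ℕ → β) :
    ∏ j ∈ Finset.range (2 * s), u (j / 2) = ∏ i ∈ Finset.range s, (u i) ^ 2 := by
  induction s with
  | zero => simp
  | succ k ih =>
    have h2 : 2 * (k + 1) = (2 * k + 1) + 1 := by ring
    rw [h2, Finset.prod_range_succ, Finset.prod_range_succ, Finset.prod_range_succ, ih]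
    have e1 : (2 * k) / 2 = k := by omega
    have e2 : (2 * k + 1) / 2 = k := by omega
    rw [e1, e2, mul_assoc, ← sq]

lemma prod_fin_split (n s M : ℕ) (hs : 2 * s ≤ n) (t : ℕ → ℕ) :
    ∏ j : Fin n, (if (j : ℕ) < 2 * s then t ((j : ℕ) / 2) else M)
      = (∏ i ∈ Finset.range s, (t i) ^ 2) * M ^ (n - 2 * s) := by
  rw [Fin.prod_univ_eq_prod_range (fun j => if j < 2 * s then t (j / 2) else M) n]
  rw [Finset.range_eq_Ico, ← Finset.prod_Ico_consecutive _ (Nat.zero_le (2 * s)) hs]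
  congr 1
  · rw [← Finset.range_eq_Ico]
    rw [← prod_halves s t]
    apply Finset.prod_congr rfl
    intro j hj
    rw [Finset.mem_range] at hj
    rw [if_pos hj]
  · rw [Finset.prod_congr rfl (fun j hj => ?_), Finset.prod_const, Nat.card_Ico]
    rw [Finset.mem_Ico] at hj
    rw [if_neg (by omega)]

/-! ### Case-analysis helper lemmas -/

lemma aux_exists_good_prime {m : ℕ} (hm : m ≠ 0) {A : ℕ} (hA : A ≠ 0)
    (hne : Nat.gcd A m ≠ m) :
    ∃ p, p.Prime ∧ (Nat.gcd A m).factorization p < m.factorization p := by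
  have hdvd : Nat.gcd A m ∣ m := Nat.gcd_dvd_right A m
  have hG0 : Nat.gcd A m ≠ 0 := Nat.gcd_ne_zero_right hm
  have hnd : ¬ m ∣ Nat.gcd A m := fun hc => hne (Nat.dvd_antisymm hdvd hc)
  rw [← Nat.factorization_le_iff_dvd hm hG0] at hnd
  rw [Finsupp.le_def] at hnd
  push_neg at hnd
  obtain ⟨p, hp⟩ := hnd
  refine ⟨p, ?_, hp⟩
  have hpos : 0 < m.factorization p := by omega
  have hmem : p ∈ m.factorization.support := Finsupp.mem_support_iff.mpr (by omega)
  rw [Nat.support_factorization] at hmem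
  exact Nat.prime_of_mem_primeFactors hmem

lemma aux_fact_dvd_le {a b : ℕ} (hab : a ∣ b) (ha : a ≠ 0) (hb : b ≠ 0) (p : ℕ) :
    a.factorization p ≤ b.factorization p := by
  have := (Nat.factorization_le_iff_dvd ha hb).mpr hab
  exact this p

lemma aux_s_le_of_cnt (m s s' : ℕ) (hm : m ≠ 0) (A B : ℕ → ℕ)
    (hAne : ∀ i < s, A i ≠ 0)
    (hmono : ∀ i j, i ≤ j → j < s → Nat.gcd (A i) m ∣ Nat.gcd (A j) m)
    (hprop : 0 < s → Nat.gcd (A (s - 1)) m ≠ m)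
    (CNT : ∀ p, p.Prime → ∀ e, p ^ e ∣ m → ∀ T ≤ e,
      ((Finset.range s).filter (fun i => min ((A i).factorization p) e < T)).card
      = ((Finset.range s').filter (fun i => min ((B i).factorization p) e < T)).card) :
    s ≤ s' := by
  rcases Nat.eq_zero_or_pos s with hs0 | hs0
  · omega
  obtain ⟨p, hp, hplt⟩ := aux_exists_good_prime hm (hAne (s - 1) (by omega)) (hprop hs0)
  set e := m.factorization p with he
  have hpe : p ^ e ∣ m := Nat.ordProj_dvd m p
  have hkey := CNT p hp e hpe e le_rfl
  have hGfact : ∀ i, i < s → (Nat.gcd (A i) m).factorization p = min ((A i).factorization p) e := by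
    intro i hi
    rw [Nat.factorization_gcd (hAne i hi) hm]
    rfl
  rw [hGfact (s - 1) (by omega)] at hplt
  have hall : ∀ i, i < s → min ((A i).factorization p) e < e := by
    intro i hi
    have h1 : Nat.gcd (A i) m ∣ Nat.gcd (A (s - 1)) m := hmono i (s - 1) (by omega) (by omega)
    have h2 := aux_fact_dvd_le h1 (Nat.gcd_ne_zero_right hm) (Nat.gcd_ne_zero_right hm) p
    rw [hGfact i hi, hGfact (s - 1) (by omega)] at h2
    omega
  have hfull : ((Finset.range s).filter (fun i => min ((A i).factorization p) e < e)).card = s := by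
    rw [Finset.filter_true_of_mem (fun i hi => hall i (Finset.mem_range.mp hi)), Finset.card_range]
  calc s = _ := hfull.symm
    _ = _ := hkey
    _ ≤ (Finset.range s').card := Finset.card_le_card (Finset.filter_subset _ _)
    _ = s' := Finset.card_range s'

lemma aux_gcd_eq_of_cnt (m s : ℕ) (hm : m ≠ 0) (A B : ℕ → ℕ)
    (hAne : ∀ i < s, A i ≠ 0) (hBne : ∀ i < s, B i ≠ 0)
    (hmonoA : ∀ i j, i ≤ j → j < s → Nat.gcd (A i) m ∣ Nat.gcd (A j) m)
    (hmonoB : ∀ i j, i ≤ j → j < s → Nat.gcd (B i) m ∣ Nat.gcd (B j) m)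
    (CNT : ∀ p, p.Prime → ∀ e, p ^ e ∣ m → ∀ T ≤ e,
      ((Finset.range s).filter (fun i => min ((A i).factorization p) e < T)).card
      = ((Finset.range s).filter (fun i => min ((B i).factorization p) e < T)).card) :
    ∀ i < s, Nat.gcd (A i) m = Nat.gcd (B i) m := by
  intro i hi
  apply Nat.eq_of_factorization_eq (Nat.gcd_ne_zero_right hm) (Nat.gcd_ne_zero_right hm)
  intro p
  by_cases hp : p.Prime
  · set e := m.factorization p with he
    have hGfactA : ∀ j, j < s → (Nat.gcd (A j) m).factorization p
        = min ((A j).factorization p) e := by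
      intro j hj
      rw [Nat.factorization_gcd (hAne j hj) hm]
      rfl
    have hGfactB : ∀ j, j < s → (Nat.gcd (B j) m).factorization p
        = min ((B j).factorization p) e := by
      intro j hj
      rw [Nat.factorization_gcd (hBne j hj) hm]
      rfl
    rcases Nat.eq_zero_or_pos e with he0 | hepos
    · rw [hGfactA i hi, hGfactB i hi, he0]
      omega
    · have hpe : p ^ e ∣ m := Nat.ordProj_dvd m p
      have hsort := sort_eq e s (fun j => min ((A j).factorization p) e)
        (fun j => min ((B j).factorization p) e)
        (fun j k hjk hk => by
          show min ((A j).factorization p) e ≤ min ((A k).factorization p) e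
          have h2 := aux_fact_dvd_le (hmonoA j k hjk hk)
            (Nat.gcd_ne_zero_right hm) (Nat.gcd_ne_zero_right hm) p
          rw [hGfactA j (by omega), hGfactA k hk] at h2
          exact h2)
        (fun j k hjk hk => by
          show min ((B j).factorization p) e ≤ min ((B k).factorization p) e
          have h2 := aux_fact_dvd_le (hmonoB j k hjk hk)
            (Nat.gcd_ne_zero_right hm) (Nat.gcd_ne_zero_right hm) p
          rw [hGfactB j (by omega), hGfactB k hk] at h2
          exact h2)
        (fun j _ => Nat.min_le_right _ _) (fun j _ => Nat.min_le_right _ _)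
        (CNT p hp e hpe)
      rw [hGfactA i hi, hGfactB i hi]
      have hres : min ((A i).factorization p) e = min ((B i).factorization p) e := hsort i hi
      exact hres
  · rw [Nat.factorization_eq_zero_of_not_prime _ hp, Nat.factorization_eq_zero_of_not_prime _ hp]

lemma aux_zero_case (s s' : ℕ) (A B : ℕ → ℕ)
    (hAne : ∀ i < s, A i ≠ 0) (hBne : ∀ i < s', B i ≠ 0)
    (hmonoA : ∀ i j, i ≤ j → j < s → A i ∣ A j)
    (hmonoB : ∀ i j, i ≤ j → j < s' → B i ∣ B j)
    (CNT : ∀ p, p.Prime → ∀ e : ℕ, ∀ T ≤ e,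
      ((Finset.range s).filter (fun i => min ((A i).factorization p) e < T)).card
      = ((Finset.range s').filter (fun i => min ((B i).factorization p) e < T)).card) :
    s = s' ∧ ∀ i < s, A i = B i := by
  have big : ∀ p : ℕ, ∃ e : ℕ, (∀ i < s, (A i).factorization p < e)
      ∧ (∀ i < s', (B i).factorization p < e) := by
    intro p
    refine ⟨1 + (∑ i ∈ Finset.range s, (A i).factorization p)
      + (∑ i ∈ Finset.range s', (B i).factorization p), ?_, ?_⟩
    · intro i hi
      have hle : (A i).factorization p ≤ ∑ i ∈ Finset.range s, (A i).factorization p :=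
        Finset.single_le_sum (f := fun i => (A i).factorization p)
          (fun j _ => Nat.zero_le _) (Finset.mem_range.mpr hi)
      omega
    · intro i hi
      have hle : (B i).factorization p ≤ ∑ i ∈ Finset.range s', (B i).factorization p :=
        Finset.single_le_sum (f := fun i => (B i).factorization p)
          (fun j _ => Nat.zero_le _) (Finset.mem_range.mpr hi)
      omega
  have hss : s = s' := by
    obtain ⟨e, heA, heB⟩ := big 2
    have hkey := CNT 2 Nat.prime_two e e le_rfl
    have h1 : ((Finset.range s).filter
        (fun i => min ((A i).factorization 2) e < e)).card = s := by
      rw [Finset.filter_true_of_mem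
        (fun i hi => by have := heA i (Finset.mem_range.mp hi); omega), Finset.card_range]
    have h2 : ((Finset.range s').filter
        (fun i => min ((B i).factorization 2) e < e)).card = s' := by
      rw [Finset.filter_true_of_mem
        (fun i hi => by have := heB i (Finset.mem_range.mp hi); omega), Finset.card_range]
    omega
  subst hss
  refine ⟨rfl, fun i hi => ?_⟩
  apply Nat.eq_of_factorization_eq (hAne i hi) (hBne i hi)
  intro p
  by_cases hp : p.Prime
  · obtain ⟨e, heA, heB⟩ := big p
    have hsort := sort_eq e s (fun j => min ((A j).factorization p) e)
      (fun j => min ((B j).factorization p) e)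
      (fun j k hjk hk => by
        show min ((A j).factorization p) e ≤ min ((A k).factorization p) e
        have h2 := aux_fact_dvd_le (hmonoA j k hjk hk) (hAne j (by omega)) (hAne k hk) p
        omega)
      (fun j k hjk hk => by
        show min ((B j).factorization p) e ≤ min ((B k).factorization p) e
        have h2 := aux_fact_dvd_le (hmonoB j k hjk hk) (hBne j (by omega)) (hBne k hk) p
        omega)
      (fun j _ => Nat.min_le_right _ _) (fun j _ => Nat.min_le_right _ _)
      (CNT p hp e)
    have hres : min ((A i).factorization p) e = min ((B i).factorization p) e := hsort i hi
    have hA2 := heA i hi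
    have hB2 := heB i hi
    omega
  · rw [Nat.factorization_eq_zero_of_not_prime _ hp, Nat.factorization_eq_zero_of_not_prime _ hp]

lemma Nmat_map {R S : Type*} [Ring R] [Ring S] (f : R →+* S) {n s : ℕ} {h : ℕ → R} :
    (Nmat n s h).map f = Nmat n s (fun i => f (h i)) := by
  ext i j
  simp only [Nmat, Matrix.map_apply, Matrix.of_apply]
  split_ifs <;> simp

lemma Nmat_smul {R : Type*} [CommRing R] {n s : ℕ} (c : R) (h : ℕ → R) :
    c • Nmat n s h = Nmat n s (fun i => c * h i) := by
  ext i j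
  simp only [Nmat, Matrix.smul_apply, Matrix.of_apply, smul_eq_mul]
  split_ifs <;> ring

/-- Over a cyclic group `Z = ℤ/mℤ`: if `N(h_1, …, z·h_s)` and `N(h_1', …, z'·h_{s'}')`
(with `h_i, h_i' ∈ P` nonzero, `h_1∣⋯∣h_s`, `h_1'∣⋯∣h_{s'}'`, `z, z' ∈ Zˣ`) lie in the
same `GL_n(ℤ)`-orbit under `g.A = g A gᵀ`, then `s = s'` and `h_i = h_i'` for all `i`. -/
theorem gl_orbit_alt_normal_form_invariants (m n : ℕ)
    (P : Set (ZMod m)) (hP1 : (1 : ZMod m) ∈ P)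
    (hPmul : ∀ p ∈ P, ∀ q ∈ P, p * q ∈ P)
    (hPrep : ∀ a : ZMod m, ∃! p : ZMod m, p ∈ P ∧ ∃ u : (ZMod m)ˣ, a = p * u)
    (s s' : ℕ) (h h' : ℕ → ZMod m) (z z' : (ZMod m)ˣ)
    (hsn : 2 * s ≤ n) (hsn' : 2 * s' ≤ n)
    (hh : ∀ i < s, h i ∈ P ∧ h i ≠ 0)
    (hh' : ∀ i < s', h' i ∈ P ∧ h' i ≠ 0)
    (hchain : ∀ i, i + 1 < s → h i ∣ h (i + 1))
    (hchain' : ∀ i, i + 1 < s' → h' i ∣ h' (i + 1))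
    (g : Matrix (Fin n) (Fin n) ℤ) (hg : g.det = 1 ∨ g.det = -1)
    (horb : (g.map (Int.cast : ℤ → ZMod m)) *
        Nmat n s (fun i => (if i + 1 = s then (z : ZMod m) else 1) * h i) *
        (g.map (Int.cast : ℤ → ZMod m))ᵀ
      = Nmat n s' (fun i => (if i + 1 = s' then (z' : ZMod m) else 1) * h' i)) :
    s = s' ∧ ∀ i < s, h i = h' i := by
  classical
  set hz : ℕ → ZMod m := fun i => (if i + 1 = s then (z : ZMod m) else 1) * h i with hzdef
  set hz' : ℕ → ZMod m := fun i => (if i + 1 = s' then (z' : ZMod m) else 1) * h' i with hz'def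
  set L : ℕ → ℤ := fun i => (ZMod.cast (hz i) : ℤ) with Ldef
  set L' : ℕ → ℤ := fun i => (ZMod.cast (hz' i) : ℤ) with L'def
  have hLcast : ∀ i, ((L i : ℤ) : ZMod m) = hz i := fun i => ZMod.intCast_zmod_cast _
  have hL'cast : ∀ i, ((L' i : ℤ) : ZMod m) = hz' i := fun i => ZMod.intCast_zmod_cast _
  have hzne : ∀ i < s, hz i ≠ 0 := by
    intro i hi hc
    rw [hzdef] at hc
    simp only at hc
    have hne := (hh i hi).2
    split_ifs at hc with hcase
    · exact hne ((Units.mul_right_eq_zero z).mp hc)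
    · rw [one_mul] at hc; exact hne hc
  have hz'ne : ∀ i < s', hz' i ≠ 0 := by
    intro i hi hc
    rw [hz'def] at hc
    simp only at hc
    have hne := (hh' i hi).2
    split_ifs at hc with hcase
    · exact hne ((Units.mul_right_eq_zero z').mp hc)
    · rw [one_mul] at hc; exact hne hc
  have hAne : ∀ i < s, (L i).natAbs ≠ 0 := by
    intro i hi hc
    apply hzne i hi
    have h0 : L i = 0 := Int.natAbs_eq_zero.mp hc
    rw [← hLcast i, h0, Int.cast_zero]
  have hBne : ∀ i < s', (L' i).natAbs ≠ 0 := by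
    intro i hi hc
    apply hz'ne i hi
    have h0 : L' i = 0 := Int.natAbs_eq_zero.mp hc
    rw [← hL'cast i, h0, Int.cast_zero]
  have hGA : ∀ i < s, Nat.gcd (L i).natAbs m = Nat.gcd (h i).val m := by
    intro i hi
    rw [Ldef]
    simp only
    rw [natAbs_cast_val]
    rw [hzdef]
    simp only
    split_ifs with hcase
    · exact gcd_val_unit_mul m z (h i)
    · rw [one_mul]
  have hGB : ∀ i < s', Nat.gcd (L' i).natAbs m = Nat.gcd (h' i).val m := by
    intro i hi
    rw [L'def]
    simp only
    rw [natAbs_cast_val]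
    rw [hz'def]
    simp only
    split_ifs with hcase
    · exact gcd_val_unit_mul m z' (h' i)
    · rw [one_mul]
  -- adjacent divisibility of gcds
  have adjA : ∀ i, i + 1 < s → Nat.gcd (h i).val m ∣ Nat.gcd (h (i + 1)).val m := by
    intro i hi1
    obtain ⟨t, ht⟩ := hchain i hi1
    set x : ℤ := (ZMod.cast (h i) : ℤ) with hx
    set y : ℤ := (ZMod.cast (h (i + 1)) : ℤ) with hy
    set tt : ℤ := (ZMod.cast t : ℤ) with htt
    have hdvdm : (m : ℤ) ∣ y - x * tt := by
      rw [← ZMod.intCast_zmod_eq_zero_iff_dvd]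
      push_cast
      rw [ZMod.intCast_zmod_cast, ZMod.intCast_zmod_cast, ZMod.intCast_zmod_cast, ← ht]
      ring
    set d := Nat.gcd (h i).val m with hd
    have hdx : (d : ℤ) ∣ x := by
      have h1 : d ∣ x.natAbs := by
        rw [hx, natAbs_cast_val]
        exact Nat.gcd_dvd_left _ _
      have h2 : ((d : ℤ)).natAbs ∣ x.natAbs := by simpa using h1
      exact Int.natAbs_dvd_natAbs.mp h2
    have hdm : (d : ℤ) ∣ (m : ℤ) := Int.natCast_dvd_natCast.mpr (Nat.gcd_dvd_right _ _)
    have hdy : (d : ℤ) ∣ y := by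
      have h3 : (d : ℤ) ∣ (y - x * tt) + x * tt :=
        dvd_add (dvd_trans hdm hdvdm) (Dvd.dvd.mul_right hdx tt)
      simpa using h3
    have h4 : d ∣ y.natAbs := by
      have := Int.natAbs_dvd_natAbs.mpr hdy
      simpa using this
    rw [hy, natAbs_cast_val] at h4
    exact Nat.dvd_gcd h4 (Nat.gcd_dvd_right _ _)
  have adjB : ∀ i, i + 1 < s' → Nat.gcd (h' i).val m ∣ Nat.gcd (h' (i + 1)).val m := by
    intro i hi1
    obtain ⟨t, ht⟩ := hchain' i hi1
    set x : ℤ := (ZMod.cast (h' i) : ℤ) with hx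
    set y : ℤ := (ZMod.cast (h' (i + 1)) : ℤ) with hy
    set tt : ℤ := (ZMod.cast t : ℤ) with htt
    have hdvdm : (m : ℤ) ∣ y - x * tt := by
      rw [← ZMod.intCast_zmod_eq_zero_iff_dvd]
      push_cast
      rw [ZMod.intCast_zmod_cast, ZMod.intCast_zmod_cast, ZMod.intCast_zmod_cast, ← ht]
      ring
    set d := Nat.gcd (h' i).val m with hd
    have hdx : (d : ℤ) ∣ x := by
      have h1 : d ∣ x.natAbs := by
        rw [hx, natAbs_cast_val]
        exact Nat.gcd_dvd_left _ _
      have h2 : ((d : ℤ)).natAbs ∣ x.natAbs := by simpa using h1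
      exact Int.natAbs_dvd_natAbs.mp h2
    have hdm : (d : ℤ) ∣ (m : ℤ) := Int.natCast_dvd_natCast.mpr (Nat.gcd_dvd_right _ _)
    have hdy : (d : ℤ) ∣ y := by
      have h3 : (d : ℤ) ∣ (y - x * tt) + x * tt :=
        dvd_add (dvd_trans hdm hdvdm) (Dvd.dvd.mul_right hdx tt)
      simpa using h3
    have h4 : d ∣ y.natAbs := by
      have := Int.natAbs_dvd_natAbs.mpr hdy
      simpa using this
    rw [hy, natAbs_cast_val] at h4
    exact Nat.dvd_gcd h4 (Nat.gcd_dvd_right _ _)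
  have monoA : ∀ j, j < s → ∀ i, i ≤ j → Nat.gcd (h i).val m ∣ Nat.gcd (h j).val m := by
    intro j
    induction j with
    | zero =>
      intro _ i hij
      have : i = 0 := by omega
      subst this
      exact dvd_rfl
    | succ k ih =>
      intro hk i hij
      rcases Nat.lt_or_ge i (k + 1) with hlt | hge
      · exact dvd_trans (ih (by omega) i (by omega)) (adjA k (by omega))
      · have : i = k + 1 := by omega
        subst this
        exact dvd_rfl
  have monoB : ∀ j, j < s' → ∀ i, i ≤ j → Nat.gcd (h' i).val m ∣ Nat.gcd (h' j).val m := by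
    intro j
    induction j with
    | zero =>
      intro _ i hij
      have : i = 0 := by omega
      subst this
      exact dvd_rfl
    | succ k ih =>
      intro hk i hij
      rcases Nat.lt_or_ge i (k + 1) with hlt | hge
      · exact dvd_trans (ih (by omega) i (by omega)) (adjB k (by omega))
      · have : i = k + 1 := by omega
        subst this
        exact dvd_rfl
  have hGmonoA : ∀ i j, i ≤ j → j < s → Nat.gcd (L i).natAbs m ∣ Nat.gcd (L j).natAbs m := by
    intro i j hij hj
    rw [hGA i (by omega), hGA j hj]
    exact monoA j hj i hij
  have hGmonoB : ∀ i j, i ≤ j → j < s' → Nat.gcd (L' i).natAbs m ∣ Nat.gcd (L' j).natAbs m := by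
    intro i j hij hj
    rw [hGB i (by omega), hGB j hj]
    exact monoB j hj i hij
  -- the master counting identity
  have KEY : ∀ M : ℕ, M ≠ 0 → M ∣ m → ∀ c : ℕ,
      (∏ i ∈ Finset.range s, Int.gcd ((c : ℤ) * L i) (M : ℤ) ^ 2) * M ^ (n - 2 * s)
      = (∏ i ∈ Finset.range s', Int.gcd ((c : ℤ) * L' i) (M : ℤ) ^ 2) * M ^ (n - 2 * s') := by
    intro M hM hMm c
    haveI : NeZero M := ⟨hM⟩
    set φ : ZMod m →+* ZMod M := ZMod.castHom hMm (ZMod M) with hφ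
    have hmapg : (g.map (Int.cast : ℤ → ZMod m)).map φ = g.map (Int.cast : ℤ → ZMod M) := by
      rw [Matrix.map_map]
      ext i j
      simp only [Matrix.map_apply, Function.comp_apply]
      exact map_intCast φ (g i j)
    have horbM : (g.map (Int.cast : ℤ → ZMod M)) * Nmat n s (fun i => φ (hz i)) *
        (g.map (Int.cast : ℤ → ZMod M))ᵀ = Nmat n s' (fun i => φ (hz' i)) := by
      have hmap := congrArg (fun X => X.map (φ : ZMod m → ZMod M)) horb
      rw [Matrix.map_mul, Matrix.map_mul, Matrix.transpose_map, hmapg,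
        Nmat_map φ, Nmat_map φ] at hmap
      exact hmap
    have hsc : (g.map (Int.cast : ℤ → ZMod M)) * ((c : ZMod M) • Nmat n s (fun i => φ (hz i))) *
        (g.map (Int.cast : ℤ → ZMod M))ᵀ = (c : ZMod M) • Nmat n s' (fun i => φ (hz' i)) := by
      rw [Matrix.mul_smul, Matrix.smul_mul, horbM]
    rw [Nmat_smul, Nmat_smul] at hsc
    have hent : (fun i => (c : ZMod M) * φ (hz i)) = (fun i => (((c : ℤ) * L i : ℤ) : ZMod M)) := by
      funext i
      rw [← hLcast i, map_intCast]
      push_cast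
      ring
    have hent' : (fun i => (c : ZMod M) * φ (hz' i)) = (fun i => (((c : ℤ) * L' i : ℤ) : ZMod M)) := by
      funext i
      rw [← hL'cast i, map_intCast]
      push_cast
      ring
    rw [hent, hent'] at hsc
    have hdet : IsUnit ((g.map (Int.cast : ℤ → ZMod M)).det) := by
      have h1 : (g.map (Int.cast : ℤ → ZMod M)).det = ((g.det : ℤ) : ZMod M) := by
        rw [show g.map (Int.cast : ℤ → ZMod M) = (Int.castRingHom (ZMod M)).mapMatrix g from rfl]
        rw [← RingHom.map_det]
        rfl
      rcases hg with hh1 | hh1 <;> rw [h1, hh1]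
      · simp
      · rw [Int.cast_neg, Int.cast_one]
        exact IsUnit.neg isUnit_one
    have hcard := aux_card_congruence M n g hdet
      (Nmat n s (fun i => (((c : ℤ) * L i : ℤ) : ZMod M)))
    rw [hsc] at hcard
    have hsolsA := aux_card_solutions M n s (fun i => (c : ℤ) * L i)
      (Nmat n s (fun i => (((c : ℤ) * L i : ℤ) : ZMod M)))
      (fun x => Nmat_mulVec_zero_iff n s hsn _ x)
    have hsolsB := aux_card_solutions M n s' (fun i => (c : ℤ) * L' i)
      (Nmat n s' (fun i => (((c : ℤ) * L' i : ℤ) : ZMod M)))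
      (fun x => Nmat_mulVec_zero_iff n s' hsn' _ x)
    rw [hsolsA, hsolsB] at hcard
    have hsplitA := prod_fin_split n s M hsn (fun i => Int.gcd ((c : ℤ) * L i) (M : ℤ))
    have hsplitB := prod_fin_split n s' M hsn' (fun i => Int.gcd ((c : ℤ) * L' i) (M : ℤ))
    rw [hsplitA, hsplitB] at hcard
    exact hcard.symm
  -- per-prime exponent sums
  have SUM : ∀ p : ℕ, p.Prime → ∀ e : ℕ, p ^ e ∣ m → ∀ f : ℕ,
      e * (n - 2 * s) + 2 * ∑ i ∈ Finset.range s, min ((L i).natAbs.factorization p + f) e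
      = e * (n - 2 * s') + 2 * ∑ i ∈ Finset.range s', min ((L' i).natAbs.factorization p + f) e := by
    intro p hp e he f
    have hkey := KEY (p ^ e) (pow_ne_zero e hp.pos.ne') he (p ^ f)
    have convA : ∀ i ∈ Finset.range s,
        Int.gcd (((p ^ f : ℕ) : ℤ) * L i) ((p ^ e : ℕ) : ℤ) ^ 2
        = p ^ (min ((L i).natAbs.factorization p + f) e * 2) := by
      intro i hi
      rw [Finset.mem_range] at hi
      have h1 : Int.gcd (((p ^ f : ℕ) : ℤ) * L i) ((p ^ e : ℕ) : ℤ)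
          = Nat.gcd (p ^ f * (L i).natAbs) (p ^ e) := by
        show Nat.gcd (Int.natAbs _) (Int.natAbs _) = _
        rw [Int.natAbs_mul, Int.natAbs_natCast, Int.natAbs_natCast]
      have h2 : (p ^ f * (L i).natAbs).factorization p = f + (L i).natAbs.factorization p := by
        rw [Nat.factorization_mul (pow_ne_zero f hp.pos.ne') (hAne i hi)]
        simp [Nat.factorization_pow, hp.factorization]
      rw [h1, gcd_pow_prime hp e (mul_ne_zero (pow_ne_zero f hp.pos.ne') (hAne i hi)), h2,
        ← pow_mul]
      congr 1
      omega
    have convB : ∀ i ∈ Finset.range s',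
        Int.gcd (((p ^ f : ℕ) : ℤ) * L' i) ((p ^ e : ℕ) : ℤ) ^ 2
        = p ^ (min ((L' i).natAbs.factorization p + f) e * 2) := by
      intro i hi
      rw [Finset.mem_range] at hi
      have h1 : Int.gcd (((p ^ f : ℕ) : ℤ) * L' i) ((p ^ e : ℕ) : ℤ)
          = Nat.gcd (p ^ f * (L' i).natAbs) (p ^ e) := by
        show Nat.gcd (Int.natAbs _) (Int.natAbs _) = _
        rw [Int.natAbs_mul, Int.natAbs_natCast, Int.natAbs_natCast]
      have h2 : (p ^ f * (L' i).natAbs).factorization p = f + (L' i).natAbs.factorization p := by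
        rw [Nat.factorization_mul (pow_ne_zero f hp.pos.ne') (hBne i hi)]
        simp [Nat.factorization_pow, hp.factorization]
      rw [h1, gcd_pow_prime hp e (mul_ne_zero (pow_ne_zero f hp.pos.ne') (hBne i hi)), h2,
        ← pow_mul]
      congr 1
      omega
    rw [Finset.prod_congr rfl convA, Finset.prod_congr rfl convB,
      Finset.prod_pow_eq_pow_sum, Finset.prod_pow_eq_pow_sum,
      ← pow_mul, ← pow_mul, ← pow_add, ← pow_add] at hkey
    have hexp := Nat.pow_right_injective hp.two_le hkey
    rw [← Finset.sum_mul, ← Finset.sum_mul] at hexp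
    linarith [hexp]
  have CNT : ∀ p : ℕ, p.Prime → ∀ e : ℕ, p ^ e ∣ m → ∀ T ≤ e,
      ((Finset.range s).filter (fun i => min ((L i).natAbs.factorization p) e < T)).card
      = ((Finset.range s').filter (fun i => min ((L' i).natAbs.factorization p) e < T)).card :=
    fun p hp e he => sumcnt n s s' e _ _ (SUM p hp e he)
  by_cases hm : m = 0
  · -- the integer case
    subst hm
    have hzc := aux_zero_case s s' (fun i => (L i).natAbs) (fun i => (L' i).natAbs) hAne hBne
      (fun i j hij hj => by
        have := hGmonoA i j hij hj
        simpa [Nat.gcd_zero_right] using this)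
      (fun i j hij hj => by
        have := hGmonoB i j hij hj
        simpa [Nat.gcd_zero_right] using this)
      (fun p hp e => CNT p hp e (dvd_zero _))
    obtain ⟨hss, hAB⟩ := hzc
    refine ⟨hss, fun i hi => ?_⟩
    have hab2 : (L i).natAbs = (L' i).natAbs := hAB i hi
    have hgcd : Nat.gcd (h i).val 0 = Nat.gcd (h' i).val 0 := by
      rw [← hGA i hi, ← hGB i (by omega), hab2]
    obtain ⟨u, hu⟩ := assoc_of_gcd_eq 0 (h i) (h' i) hgcd
    obtain ⟨p0, hp0, huniq⟩ := hPrep (h i)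
    have e1 : h i = p0 := huniq (h i) ⟨(hh i hi).1, 1, by rw [Units.val_one, mul_one]⟩
    have e2 : h' i = p0 := huniq (h' i) ⟨(hh' i (by omega)).1, u, hu⟩
    rw [e1, e2]
  · -- m positive
    haveI : NeZero m := ⟨hm⟩
    have hpropA : 0 < s → Nat.gcd ((fun i => (L i).natAbs) (s - 1)) m ≠ m := by
      intro hs0
      show Nat.gcd ((L (s - 1)).natAbs) m ≠ m
      rw [hGA (s - 1) (by omega)]
      have hv0 : (h (s - 1)).val ≠ 0 :=
        fun hc => (hh (s - 1) (by omega)).2 ((ZMod.val_eq_zero _).mp hc)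
      have hvlt : (h (s - 1)).val < m := ZMod.val_lt _
      have := Nat.gcd_le_left (n := m) (Nat.pos_of_ne_zero hv0)
      omega
    have hpropB : 0 < s' → Nat.gcd ((fun i => (L' i).natAbs) (s' - 1)) m ≠ m := by
      intro hs0
      show Nat.gcd ((L' (s' - 1)).natAbs) m ≠ m
      rw [hGB (s' - 1) (by omega)]
      have hv0 : (h' (s' - 1)).val ≠ 0 :=
        fun hc => (hh' (s' - 1) (by omega)).2 ((ZMod.val_eq_zero _).mp hc)
      have hvlt : (h' (s' - 1)).val < m := ZMod.val_lt _
      have := Nat.gcd_le_left (n := m) (Nat.pos_of_ne_zero hv0)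
      omega
    have hle1 : s ≤ s' := aux_s_le_of_cnt m s s' hm (fun i => (L i).natAbs)
      (fun i => (L' i).natAbs) hAne hGmonoA hpropA CNT
    have hle2 : s' ≤ s := aux_s_le_of_cnt m s' s hm (fun i => (L' i).natAbs)
      (fun i => (L i).natAbs) hBne hGmonoB hpropB
      (fun p hp e he T hT => (CNT p hp e he T hT).symm)
    have hss : s = s' := le_antisymm hle1 hle2
    subst hss
    refine ⟨rfl, fun i hi => ?_⟩
    have hGeq := aux_gcd_eq_of_cnt m s hm (fun i => (L i).natAbs) (fun i => (L' i).natAbs)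
      hAne hBne hGmonoA hGmonoB (fun p hp e he => CNT p hp e he)
    have hgcd : Nat.gcd (h i).val m = Nat.gcd (h' i).val m := by
      rw [← hGA i hi, ← hGB i hi]
      exact hGeq i hi
    obtain ⟨u, hu⟩ := assoc_of_gcd_eq m (h i) (h' i) hgcd
    obtain ⟨p0, hp0, huniq⟩ := hPrep (h i)
    have e1 : h i = p0 := huniq (h i) ⟨(hh i hi).1, 1, by rw [Units.val_one, mul_one]⟩
    have e2 : h' i = p0 := huniq (h' i) ⟨(hh' i hi).1, u, hu⟩
    rw [e1, e2]
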